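/- For all natural numbers k ≥ 0 and m ≥ 1, every real number τ, and every real number β with 0 < β ≤ 1, the interval integral ∫_β^1 (1 - (1-t)^k)·(τ/t)·(1 - (1-β)^{m-1}) dt equals τ·Σ_{i=1}^{k} C(k,i)·(-1)^{i+1}·((1 - β^i)/i)·(1 - (1-β)^{m-1}). -/

import Mathlib

lemma binom_expand (k : ℕ) (t : ℝ) :
    1 - (1 - t) ^ k = ∑ i ∈ Finset.Icc 1 k, (k.choose i : ℝ) * (-1) ^ (i + 1) * t ^ i := by
  have h : (1 - t) ^ k = ∑ i ∈ Finset.range (k + 1), (-t) ^ i * (1:ℝ) ^ (k - i) * k.choose i := by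
    rw [show (1:ℝ) - t = -t + 1 by ring, add_pow]
  rw [h, Finset.range_eq_Ico, Finset.sum_eq_sum_Ico_succ_bot (Nat.succ_pos k)]
  have he : Finset.Ico 1 (k + 1) = Finset.Icc 1 k := rfl
  rw [he]
  simp only [pow_zero, one_pow, one_mul, Nat.choose_zero_right, Nat.cast_one, mul_one]
  rw [sub_add_eq_sub_sub, sub_self, zero_sub, ← Finset.sum_neg_distrib]
  refine Finset.sum_congr rfl fun i _ => ?_
  rw [neg_pow]
  ring

theorem stmt_7 (k m : ℕ) (hm : 1 ≤ m) (τ β : ℝ) (hβ : 0 < β) (hβ1 : β ≤ 1) :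
    ∫ t in β..1, (1 - (1 - t) ^ k) * (τ / t) * (1 - (1 - β) ^ (m - 1)) =
      τ * ∑ i ∈ Finset.Icc 1 k,
        (k.choose i : ℝ) * (-1) ^ (i + 1) * ((1 - β ^ i) / i) *
          (1 - (1 - β) ^ (m - 1)) := by
  set c : ℝ := 1 - (1 - β) ^ (m - 1) with hc
  have hcong : Set.EqOn
      (fun t => (1 - (1 - t) ^ k) * (τ / t) * c)
      (fun t => ∑ i ∈ Finset.Icc 1 k,
        τ * c * ((k.choose i : ℝ) * (-1) ^ (i + 1) * t ^ (i - 1)))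
      (Set.uIcc β 1) := by
    intro t ht
    rw [Set.uIcc_of_le hβ1] at ht
    have ht0 : t ≠ 0 := ne_of_gt (lt_of_lt_of_le hβ ht.1)
    simp only
    rw [binom_expand, Finset.sum_mul, Finset.sum_mul]
    refine Finset.sum_congr rfl fun i hi => ?_
    have hi1 : 1 ≤ i := (Finset.mem_Icc.mp hi).1
    have hpow : t ^ i = t ^ (i - 1) * t := by
      rw [← pow_succ, Nat.sub_add_cancel hi1]
    rw [hpow]
    field_simp
  rw [intervalIntegral.integral_congr hcong,
    intervalIntegral.integral_finset_sum (fun i _ => by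
      exact (Continuous.intervalIntegrable (by continuity) β 1)),
    Finset.mul_sum]
  refine Finset.sum_congr rfl fun i hi => ?_
  have hi1 : 1 ≤ i := (Finset.mem_Icc.mp hi).1
  rw [intervalIntegral.integral_const_mul, intervalIntegral.integral_const_mul, integral_pow]
  rw [Nat.sub_add_cancel hi1, one_pow]
  rw [show ((i - 1 : ℕ) : ℝ) + 1 = (i : ℝ) by rw [Nat.cast_sub hi1]; ring]
  ring
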